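/- Let Λ = ExteriorAlgebra ℂ (Fin 2 → ℂ) and for i : Fin 2 let e i = ExteriorAlgebra.ι ℂ (Pi.single i 1) (the odd generators θ₁, θ₂, satisfying (e i)² = 0). Then e 0 * e 1 = e 0 * (e 0 + e 1), yet e 1 is not associated to e 0 + e 1: there are no units u v : Λˣ with e 0 + e 1 = ↑u * e 1 * ↑v. Hence unique factorization fails in the regular local superring ℂ[θ₁, θ₂], showing that the Auslander–Buchsbaum theorem has no analogue for superrings. (Section 4.2 of the paper.) -/
import Mathlib


/-- **Section 4.2**: in the regular local superring `ℂ[θ₁, θ₂]` (the exterior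
algebra on two generators over `ℂ`) we have `θ₁θ₂ = θ₁(θ₁ + θ₂)` but `θ₂` is not
associated to `θ₁ + θ₂`; hence unique factorization fails, and the
Auslander–Buchsbaum theorem has no analogue for superrings. -/
theorem exteriorAlgebra_unique_factorization_fails :
    (ExteriorAlgebra.ι ℂ (Pi.single 0 1 : Fin 2 → ℂ)) *
        (ExteriorAlgebra.ι ℂ (Pi.single 1 1 : Fin 2 → ℂ)) =
      (ExteriorAlgebra.ι ℂ (Pi.single 0 1 : Fin 2 → ℂ)) *
        ((ExteriorAlgebra.ι ℂ (Pi.single 0 1 : Fin 2 → ℂ)) +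
          (ExteriorAlgebra.ι ℂ (Pi.single 1 1 : Fin 2 → ℂ))) ∧
    ¬ ∃ u v : (ExteriorAlgebra ℂ (Fin 2 → ℂ))ˣ,
        (ExteriorAlgebra.ι ℂ (Pi.single 0 1 : Fin 2 → ℂ)) +
            (ExteriorAlgebra.ι ℂ (Pi.single 1 1 : Fin 2 → ℂ)) =
          (u : ExteriorAlgebra ℂ (Fin 2 → ℂ)) *
            (ExteriorAlgebra.ι ℂ (Pi.single 1 1 : Fin 2 → ℂ)) *
            (v : ExteriorAlgebra ℂ (Fin 2 → ℂ)) := by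
  constructor
  · rw [mul_add, ExteriorAlgebra.ι_sq_zero, zero_add]
  · rintro ⟨u, v, h⟩
    -- project onto the first coordinate, killing `e 1`
    set f : (Fin 2 → ℂ) →ₗ[ℂ] (Fin 2 → ℂ) :=
      (LinearMap.single ℂ (fun _ : Fin 2 => ℂ) 0).comp (LinearMap.proj 0) with hf
    have hmap := congrArg (ExteriorAlgebra.map f) h
    simp only [map_add, map_mul, ExteriorAlgebra.map_apply_ι] at hmap
    have hf0 : f (Pi.single 0 1 : Fin 2 → ℂ) = Pi.single 0 1 := by
      simp [hf]
    have hf1 : f (Pi.single 1 1 : Fin 2 → ℂ) = 0 := by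
      ext j
      simp [hf, Pi.single_apply]
    rw [hf0, hf1, map_zero, mul_zero, zero_mul, add_zero] at hmap
    have : (Pi.single 0 1 : Fin 2 → ℂ) = 0 := by
      have := (ExteriorAlgebra.ι_eq_zero_iff (R := ℂ) _).mp hmap
      exact this
    have := congrFun this 0
    simp [Pi.single_apply] at this
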